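/- Let $\Gamma' \subseteq \Gamma$ be groups and let $G' \subseteq \Gamma'$ be a subgroup that maps onto every finite quotient of $\Gamma'$ (i.e. for every finite-index normal subgroup $N \trianglelefteq \Gamma'$, the composite $G' \to \Gamma'/N$ is surjective). Then for every finite-index subgroup $\Gamma'' \leq \Gamma'$, the subgroup $G'' = G' \cap \Gamma''$ maps onto every finite quotient of $\Gamma''$. -/
import Mathlib

/-- let `G'` be a subgroup of a group `Γ'` that maps onto every finite
quotient of `Γ'`. Then for every finite-index subgroup `Γ'' ≤ Γ'`, the subgroup
`G'' = G' ∩ Γ''` maps onto every finite quotient of `Γ''`. -/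
theorem inter_maps_onto_finite_quotients
    {Γ' : Type*} [Group Γ'] (G' : Subgroup Γ')
    (hsurj : ∀ N : Subgroup Γ', N.Normal → N.FiniteIndex →
      ∀ x : Γ', ∃ g ∈ G', x⁻¹ * g ∈ N) :
    ∀ Γ'' : Subgroup Γ', Γ''.FiniteIndex →
      ∀ N'' : Subgroup ↥Γ'', N''.Normal → N''.FiniteIndex →
        ∀ x : ↥Γ'', ∃ g : ↥Γ'', (g : Γ') ∈ G' ∧ x⁻¹ * g ∈ N'' := by
  intro Γ'' hΓ'' N'' _hN''n hN''fi x
  -- M : image of N'' in Γ'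
  set M : Subgroup Γ' := N''.map Γ''.subtype with hM
  have hMfi : M.FiniteIndex := by
    constructor
    rw [hM, Subgroup.index_map_subtype]
    exact Nat.mul_ne_zero hN''fi.index_ne_zero hΓ''.index_ne_zero
  have hKn : M.normalCore.Normal := Subgroup.normalCore_normal M
  have hKfi : M.normalCore.FiniteIndex := Subgroup.finiteIndex_normalCore M
  obtain ⟨g, hgG, hgK⟩ := hsurj M.normalCore hKn hKfi (x : Γ')
  have hgM : (x : Γ')⁻¹ * g ∈ M := M.normalCore_le hgK
  -- the element x⁻¹ * g lies in Γ''
  obtain ⟨n, hn, hneq⟩ := hgM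
  rw [Subgroup.coe_subtype] at hneq
  have hgΓ : g ∈ Γ'' := by
    have : (g : Γ') = (x : Γ') * (n : Γ') := by
      rw [hneq]; group
    rw [this]
    exact Γ''.mul_mem x.2 n.2
  refine ⟨⟨g, hgΓ⟩, hgG, ?_⟩
  have : x⁻¹ * (⟨g, hgΓ⟩ : Γ'') = n := by
    apply Subtype.ext
    push_cast
    rw [hneq]
  rw [this]
  exact hn
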